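/- If a family of d² pure states ψ_{i,j} ∈ (ℂ^d)^{⊗t} forms a t-GMOQLS(d) and each state is fully separable, ψ_{i,j} = ψ¹_{i,j} ⊗ ⋯ ⊗ ψᵗ_{i,j}, then for each s, the array (ψˢ_{i,j}) is a quantum Latin square of dimension d. -/

import Mathlib

noncomputable section

lemma sum4_comm {β : Type*} [AddCommMonoid β] {ι : Type*} [Fintype ι] (F : ι → ι → ι → ι → β) :
    ∑ i, ∑ i', ∑ a, ∑ b, F i i' a b = ∑ a, ∑ b, ∑ i, ∑ i', F i i' a b := by
  calc ∑ i, ∑ i', ∑ a, ∑ b, F i i' a b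
      = ∑ i, ∑ a, ∑ i', ∑ b, F i i' a b :=
        Finset.sum_congr rfl fun i _ => Finset.sum_comm
    _ = ∑ a, ∑ i, ∑ i', ∑ b, F i i' a b := Finset.sum_comm
    _ = ∑ a, ∑ i, ∑ b, ∑ i', F i i' a b :=
        Finset.sum_congr rfl fun a _ => Finset.sum_congr rfl fun i _ => Finset.sum_comm
    _ = ∑ a, ∑ b, ∑ i, ∑ i', F i i' a b :=
        Finset.sum_congr rfl fun a _ => Finset.sum_comm

lemma ptrace1_sep' {t d : ℕ} (m : Fin t) (v : Fin t → EuclideanSpace ℂ (Fin d))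
    (hv : ∀ s, ‖v s‖ = 1) (a b : Fin d) :
    (∑ g : {i : Fin t // i ≠ m} → Fin d,
      (∏ s, v s (if h : s = m then a else g ⟨s, h⟩)) *
        star (∏ s, v s (if h : s = m then b else g ⟨s, h⟩))) = v m a * star (v m b) := by
  have key : ∀ (c : Fin d) (g : {i : Fin t // i ≠ m} → Fin d),
      (∏ s, v s (if h : s = m then c else g ⟨s, h⟩)) =
        v m c * ∏ s : {i : Fin t // i ≠ m}, v s (g s) := by
    intro c g
    rw [Fintype.prod_eq_mul_prod_compl m, dif_pos rfl]
    congr 1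
    rw [Finset.prod_subtype ({m}ᶜ : Finset (Fin t)) (p := fun x => x ≠ m)
      (fun x => by simp)
      (fun x => v x (if h : x = m then c else g ⟨x, h⟩))]
    exact Fintype.prod_congr _ _ fun x => by rw [dif_neg x.prop]
  have hfac : ∀ s : {i : Fin t // i ≠ m}, (∑ x : Fin d, v s.val x * star (v s.val x)) = 1 := by
    intro s
    have h1 : (inner ℂ (v s.val) (v s.val) : ℂ) = ∑ x, star (v s.val x) * v s.val x := by
      rw [PiLp.inner_apply]; simp only [RCLike.inner_apply, Complex.star_def]
      exact Finset.sum_congr rfl fun x _ => by ring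
    have h2 : (inner ℂ (v s.val) (v s.val) : ℂ) = 1 := by
      rw [inner_self_eq_norm_sq_to_K, hv]; norm_num
    calc ∑ x : Fin d, v s.val x * star (v s.val x)
        = ∑ x, star (v s.val x) * v s.val x := by simp [mul_comm]
      _ = 1 := h1 ▸ h2
  calc (∑ g : {i : Fin t // i ≠ m} → Fin d,
      (∏ s, v s (if h : s = m then a else g ⟨s, h⟩)) *
        star (∏ s, v s (if h : s = m then b else g ⟨s, h⟩)))
      = ∑ g : {i : Fin t // i ≠ m} → Fin d, (v m a * star (v m b)) *
          ∏ s : {i : Fin t // i ≠ m}, (v s (g s) * star (v s (g s))) := by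
        apply Finset.sum_congr rfl
        intro g _
        rw [key, key, star_mul', star_prod, Finset.prod_mul_distrib]
        ring
    _ = (v m a * star (v m b)) *
          ∑ g : {i : Fin t // i ≠ m} → Fin d,
            ∏ s : {i : Fin t // i ≠ m}, (v s (g s) * star (v s (g s))) := by
        rw [Finset.mul_sum]
    _ = v m a * star (v m b) := by
        have h1 : (∑ g : {i : Fin t // i ≠ m} → Fin d,
            ∏ s : {i : Fin t // i ≠ m}, (v s (g s) * star (v s (g s))))
            = ∏ s : {i : Fin t // i ≠ m}, ∑ x : Fin d, (v s x * star (v s x)) :=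
          (Fintype.prod_sum (ι := {i : Fin t // i ≠ m}) (κ := fun _ => Fin d)
            (fun s x => v (s : Fin t) x * star (v (s : Fin t) x))).symm
        rw [h1]
        simp only [Complex.star_def] at hfac
        simp [hfac]

lemma orthonormal_of_resolution {d : ℕ} (v : Fin d → EuclideanSpace ℂ (Fin d))
    (hn : ∀ i, ‖v i‖ = 1)
    (hres : ∀ a b, (∑ i, v i a * star (v i b)) = if a = b then 1 else 0) :
    Orthonormal ℂ v := by
  rw [orthonormal_iff_ite]
  have hinner : ∀ i i', (inner ℂ (v i) (v i') : ℂ) = ∑ a, star (v i a) * v i' a := by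
    intro i i'
    simp [PiLp.inner_apply, RCLike.inner_apply, mul_comm]
  have hdiag : ∀ i, (inner ℂ (v i) (v i) : ℂ) = 1 := by
    intro i; rw [inner_self_eq_norm_sq_to_K, hn]; norm_num
  have hres' : ∀ a b, (∑ i, star (v i a) * v i b) = if a = b then 1 else 0 := by
    intro a b
    have := congrArg star (hres a b)
    rw [star_sum] at this
    simpa [apply_ite, mul_comm] using this
  have hsumC : (∑ p : Fin d × Fin d,
      (inner ℂ (v p.1) (v p.2) : ℂ) * star (inner ℂ (v p.1) (v p.2) : ℂ)) = (d : ℂ) := by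
    calc ∑ p : Fin d × Fin d, (inner ℂ (v p.1) (v p.2) : ℂ) * star (inner ℂ (v p.1) (v p.2) : ℂ)
        = ∑ i, ∑ i', ∑ a, ∑ b, (star (v i a) * v i b) * (v i' a * star (v i' b)) := by
          rw [Fintype.sum_prod_type]
          apply Finset.sum_congr rfl; intro i _
          apply Finset.sum_congr rfl; intro i' _
          rw [hinner, star_sum, Finset.sum_mul_sum]
          apply Finset.sum_congr rfl; intro a _
          apply Finset.sum_congr rfl; intro b _
          simp only [star_mul', star_star]
          ring
      _ = ∑ a, ∑ b, ∑ i, ∑ i', (star (v i a) * v i b) * (v i' a * star (v i' b)) :=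
          sum4_comm _
      _ = ∑ a, ∑ b, (∑ i, star (v i a) * v i b) * (∑ i', v i' a * star (v i' b)) := by
          apply Finset.sum_congr rfl; intro a _
          apply Finset.sum_congr rfl; intro b _
          rw [Finset.sum_mul_sum]
      _ = (d : ℂ) := by
          simp only [hres, hres']
          simp [Finset.sum_ite_eq, ite_mul, Finset.card_univ]
  have hsumR : (∑ p : Fin d × Fin d, Complex.normSq (inner ℂ (v p.1) (v p.2) : ℂ)) = (d : ℝ) := by
    have : ((∑ p : Fin d × Fin d, Complex.normSq (inner ℂ (v p.1) (v p.2) : ℂ) : ℝ) : ℂ)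
        = (d : ℂ) := by
      push_cast
      rw [← hsumC]
      apply Finset.sum_congr rfl; intro p _
      rw [← Complex.mul_conj]
      rfl
    exact_mod_cast this
  intro i j
  by_cases hij : i = j
  · simp [hij, hdiag, hn]
  · simp only [hij, if_false]
    have hnng : ∀ p : Fin d × Fin d, 0 ≤ Complex.normSq (inner ℂ (v p.1) (v p.2) : ℂ) :=
      fun p => Complex.normSq_nonneg _
    set sdiag : Finset (Fin d × Fin d) := Finset.univ.image (fun k => (k, k)) with hsd
    have hmem : (i, j) ∉ sdiag := by
      simp only [hsd, Finset.mem_image, Finset.mem_univ, true_and, Prod.mk.injEq,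
        not_exists, not_and]
      intro k hk1 hk2
      exact hij (by rw [← hk1, hk2])
    have hdsum : (∑ p ∈ sdiag, Complex.normSq (inner ℂ (v p.1) (v p.2) : ℂ)) = (d : ℝ) := by
      rw [hsd, Finset.sum_image (fun x _ y _ hxy => (Prod.ext_iff.mp hxy).1)]
      simp [hdiag, Finset.card_univ, hn]
    have hle : (∑ p ∈ insert (i, j) sdiag, Complex.normSq (inner ℂ (v p.1) (v p.2) : ℂ))
        ≤ ∑ p : Fin d × Fin d, Complex.normSq (inner ℂ (v p.1) (v p.2) : ℂ) :=
      Finset.sum_le_sum_of_subset_of_nonneg (Finset.subset_univ _) (fun p _ _ => hnng p)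
    rw [Finset.sum_insert hmem, hdsum, hsumR] at hle
    have h0 : Complex.normSq (inner ℂ (v i) (v j) : ℂ) = 0 :=
      le_antisymm (by linarith) (Complex.normSq_nonneg _)
    exact Complex.normSq_eq_zero.mp h0

/-- The inner product on a complex inner product space, as a function into `ℂ`. -/
def ip {E : Type*} [NormedAddCommGroup E] [InnerProductSpace ℂ E] (x y : E) : ℂ :=
  inner ℂ x y

/-- The partial trace of `|ψ⟩⟨ψ'|` over the `t - 1` tensor factors other than `m`,
for `ψ, ψ' ∈ (ℂ^d)^{⊗t}` (modelled as `ℂ^{[d]^t}`): a `d × d` matrix acting on the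
`m`-th factor. -/
def ptrace1 {t d : ℕ} (m : Fin t) (ψ ψ' : EuclideanSpace ℂ (Fin t → Fin d)) :
    Matrix (Fin d) (Fin d) ℂ :=
  fun a b => ∑ g : {i : Fin t // i ≠ m} → Fin d,
    ψ (fun i => if h : i = m then a else g ⟨i, h⟩) *
      star (ψ' (fun i => if h : i = m then b else g ⟨i, h⟩))

/-- The partial trace of `|ψ⟩⟨ψ'|` over the `t - 2` tensor factors other than the two
distinct factors `m, m'`: a `d² × d²` matrix acting on the factors `m` and `m'`. -/
def ptrace2 {t d : ℕ} (m m' : Fin t) (ψ ψ' : EuclideanSpace ℂ (Fin t → Fin d)) :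
    Matrix (Fin d × Fin d) (Fin d × Fin d) ℂ :=
  fun a b => ∑ g : {i : Fin t // i ≠ m ∧ i ≠ m'} → Fin d,
    ψ (fun i => if h : i = m then a.1 else if h' : i = m' then a.2 else g ⟨i, h, h'⟩) *
      star (ψ' (fun i => if h : i = m then b.1 else if h' : i = m' then b.2 else
        g ⟨i, h, h'⟩))

/-- A set of generalized mutually orthogonal quantum Latin squares, `t`-GMOQLS(d):
a `d × d` array of states `ψ_{i,j} ∈ (ℂ^d)^{⊗t}` such that
(1) `⟨ψ_{i,j}, ψ_{i',j'}⟩ = δ_{ii'}δ_{jj'}`;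
(2) for every subset of `t-1` tensor factors (equivalently, every remaining factor `m`),
`Σ_i Tr |ψ_{i,j}⟩⟨ψ_{i,j'}| = δ_{jj'} I_d` and `Σ_j Tr |ψ_{i,j}⟩⟨ψ_{i',j}| = δ_{ii'} I_d`;
(3) for every subset of `t-2` factors, `Σ_{i,j} Tr |ψ_{i,j}⟩⟨ψ_{i,j}| = I_{d²}`. -/
def IsGMOQLS {t d : ℕ} (ψ : Fin d → Fin d → EuclideanSpace ℂ (Fin t → Fin d)) : Prop :=
  (∀ i j i' j', ip (ψ i j) (ψ i' j') = if i = i' ∧ j = j' then 1 else 0) ∧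
  (∀ m : Fin t, ∀ j j', ∑ i, ptrace1 m (ψ i j) (ψ i j') =
    if j = j' then (1 : Matrix (Fin d) (Fin d) ℂ) else 0) ∧
  (∀ m : Fin t, ∀ i i', ∑ j, ptrace1 m (ψ i j) (ψ i' j) =
    if i = i' then (1 : Matrix (Fin d) (Fin d) ℂ) else 0) ∧
  (∀ m m' : Fin t, m ≠ m' → ∑ i, ∑ j, ptrace2 m m' (ψ i j) (ψ i j) =
    (1 : Matrix (Fin d × Fin d) (Fin d × Fin d) ℂ))

/-- A quantum Latin square of dimension `d`: a `d × d` array of vectors in `ℂ^d`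
whose rows and columns are orthonormal bases. -/
def IsQLS {d : ℕ} (Φ : Fin d → Fin d → EuclideanSpace ℂ (Fin d)) : Prop :=
  (∀ i, Orthonormal ℂ (Φ i)) ∧ (∀ j, Orthonormal ℂ (fun i => Φ i j))

/-- If a `t`-GMOQLS(d) consists of fully separable states
`ψ_{i,j} = ψ¹_{i,j} ⊗ ⋯ ⊗ ψᵗ_{i,j}` (each factor a unit vector), then for each `s` the
array `(ψˢ_{i,j})` is a quantum Latin square of dimension `d`. -/
theorem gmoqls_separable_factors_are_qls {t d : ℕ}
    (ψ : Fin d → Fin d → EuclideanSpace ℂ (Fin t → Fin d))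
    (φ : Fin t → Fin d → Fin d → EuclideanSpace ℂ (Fin d))
    (hsep : ∀ i j, ψ i j = WithLp.toLp 2 (fun f => ∏ s, φ s i j (f s)))
    (hunit : ∀ s i j, ‖φ s i j‖ = 1)
    (h : IsGMOQLS ψ) :
    ∀ s, IsQLS (φ s) := by
  intro s
  have hpt : ∀ i j, ∀ a b : Fin d,
      ptrace1 s (ψ i j) (ψ i j) a b = φ s i j a * star (φ s i j b) := by
    intro i j a b
    rw [hsep]
    exact ptrace1_sep' s (fun s' => φ s' i j) (fun s' => hunit s' i j) a b
  constructor
  · intro i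
    apply orthonormal_of_resolution _ (fun j => hunit s i j)
    intro a b
    have h3 := h.2.2.1 s i i
    rw [if_pos rfl] at h3
    have h4 := congrFun (congrFun h3 a) b
    rw [Matrix.sum_apply] at h4
    simp only [hpt] at h4
    rw [Matrix.one_apply] at h4
    exact h4
  · intro j
    apply orthonormal_of_resolution _ (fun i => hunit s i j)
    intro a b
    have h3 := h.2.1 s j j
    rw [if_pos rfl] at h3
    have h4 := congrFun (congrFun h3 a) b
    rw [Matrix.sum_apply] at h4
    simp only [hpt] at h4
    rw [Matrix.one_apply] at h4
    exact h4
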